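/- Let d ≥ 1, let K : ℝ^d → [0,∞) be a measurable even kernel with ∫_{ℝ^d} K(x)|x| dx < ∞, let p̂ ∈ S^{d−1}, set H := {x ∈ ℝ^d : x·p̂ > 0}, and let δ ∈ (0,1). If E ⊂ ℝ^d is measurable and the symmetric difference E Δ H is contained in the closed ball B_{1−δ} of radius 1−δ centred at the origin, then for every ε > 0, (1/ε)|J²_ε(E;B) − J²_ε(H;B)| ≤ (2/δ) L^d(E Δ H) ∫_{ℝ^d} K(z)|z| dz. -/

import Mathlib

open MeasureTheory Topology Filter RealInnerProductSpace

/-- Euclidean space `ℝ^d`. -/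
abbrev Ed (d : ℕ) := EuclideanSpace ℝ (Fin d)

/-- The rescaled kernel `K_ε(x) = ε^{−d} K(x/ε)`. -/
noncomputable def Keps {d : ℕ} (K : Ed d → ℝ) (ε : ℝ) (x : Ed d) : ℝ :=
  (ε ^ d)⁻¹ * K (ε⁻¹ • x)

/-- The interaction energy
`J²_ε(E；B) = ∫_B∫_{B^c} K_ε(y−x)|χ_E(y)−χ_E(x)| dy dx`, `B` the unit ball. -/
noncomputable def J2eps {d : ℕ} (K : Ed d → ℝ) (ε : ℝ) (E : Set (Ed d)) : ℝ :=
  ∫ x in Metric.ball (0 : Ed d) 1, ∫ y in (Metric.ball (0 : Ed d) 1)ᶜ,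
    Keps K ε (y - x) * |E.indicator (fun _ => (1 : ℝ)) y - E.indicator (fun _ => (1 : ℝ)) x|

lemma Keps_nonneg {d : ℕ} {K : Ed d → ℝ} (hK : ∀ x, 0 ≤ K x) {ε : ℝ} (hε : 0 < ε) (x : Ed d) :
    0 ≤ Keps K ε x :=
  mul_nonneg (inv_nonneg.2 (pow_nonneg hε.le _)) (hK _)

lemma indicator_abs_sub_le_one {α : Type*} (E : Set α) (x y : α) :
    |E.indicator (fun _ => (1 : ℝ)) y - E.indicator (fun _ => (1 : ℝ)) x| ≤ 1 := by
  by_cases hx : x ∈ E <;> by_cases hy : y ∈ E <;> simp [Set.indicator_apply, hx, hy]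

lemma indicator_eq_of_not_mem_symmDiff {α : Type*} {E H : Set α} {x : α}
    (h : x ∉ symmDiff E H) :
    E.indicator (fun _ => (1 : ℝ)) x = H.indicator (fun _ => (1 : ℝ)) x := by
  by_cases hx : x ∈ E <;> by_cases hy : x ∈ H
  · simp [Set.indicator_apply, hx, hy]
  · exact absurd (Set.mem_symmDiff.2 (Or.inl ⟨hx, hy⟩)) h
  · exact absurd (Set.mem_symmDiff.2 (Or.inr ⟨hy, hx⟩)) h
  · simp [Set.indicator_apply, hx, hy]

lemma keps_norm_eq {d : ℕ} (K : Ed d → ℝ) {ε : ℝ} (hε : 0 < ε) (z : Ed d) :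
    Keps K ε z * ‖z‖ = ((ε ^ d)⁻¹ * ε) * ((fun w : Ed d => K w * ‖w‖) (ε⁻¹ • z)) := by
  have h1 : ‖ε⁻¹ • z‖ = ε⁻¹ * ‖z‖ := by
    rw [norm_smul, Real.norm_eq_abs, abs_of_pos (inv_pos.2 hε)]
  simp only [Keps, h1]
  field_simp

lemma keps_norm_integrable {d : ℕ} {K : Ed d → ℝ}
    (hKsum : Integrable (fun x : Ed d => K x * ‖x‖)) {ε : ℝ} (hε : 0 < ε) (x : Ed d) :
    Integrable (fun y : Ed d => Keps K ε (y - x) * ‖y - x‖) := by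
  have h2 : Integrable (fun z : Ed d => (fun w : Ed d => K w * ‖w‖) (ε⁻¹ • z)) :=
    (integrable_comp_smul_iff volume (fun w : Ed d => K w * ‖w‖) (inv_ne_zero hε.ne')).2 hKsum
  have h3 : Integrable (fun z : Ed d => Keps K ε z * ‖z‖) := by
    refine (h2.const_mul ((ε ^ d)⁻¹ * ε)).congr (Eventually.of_forall fun z => ?_)
    exact (keps_norm_eq K hε z).symm
  exact h3.comp_sub_right x

lemma keps_norm_integral {d : ℕ} (K : Ed d → ℝ) {ε : ℝ} (hε : 0 < ε) (x : Ed d) :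
    ∫ y : Ed d, Keps K ε (y - x) * ‖y - x‖ = ε * ∫ z : Ed d, K z * ‖z‖ := by
  rw [integral_sub_right_eq_self (fun z : Ed d => Keps K ε z * ‖z‖) x]
  have h1 : ∫ z : Ed d, Keps K ε z * ‖z‖
      = ((ε ^ d)⁻¹ * ε) * ∫ z : Ed d, (fun w : Ed d => K w * ‖w‖) (ε⁻¹ • z) := by
    rw [← integral_const_mul]
    exact integral_congr_ae (Eventually.of_forall fun z => keps_norm_eq K hε z)
  rw [h1, Measure.integral_comp_inv_smul_of_nonneg volume (fun w : Ed d => K w * ‖w‖) hε.le]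
  have hd : Module.finrank ℝ (Ed d) = d := finrank_euclideanSpace_fin
  rw [hd]
  simp only [smul_eq_mul]
  have hεd : (ε : ℝ) ^ d ≠ 0 := pow_ne_zero _ hε.ne'
  field_simp

/-- If `E` coincides with the halfspace `H` outside the closed ball of radius `1−δ`, then the
exterior interaction energies of `E` and `H` differ by at most
`(2ε/δ) L^d(E Δ H) ∫ K(z)|z| dz`. -/
theorem J2eps_diff_le
    {d : ℕ} (hd : 1 ≤ d)
    (K : Ed d → ℝ) (hKmeas : Measurable K) (hKnonneg : ∀ x, 0 ≤ K x)
    (hKeven : ∀ᵐ x ∂(volume : Measure (Ed d)), K (-x) = K x)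
    (hKsum : Integrable (fun x : Ed d => K x * ‖x‖))
    (p : Ed d) (hp : ‖p‖ = 1)
    (δ : ℝ) (hδ : δ ∈ Set.Ioo (0 : ℝ) 1)
    (E : Set (Ed d)) (hE : MeasurableSet E)
    (hEH : symmDiff E {x : Ed d | 0 < ⟪x, p⟫} ⊆ Metric.closedBall (0 : Ed d) (1 - δ))
    (ε : ℝ) (hε : 0 < ε) :
    (1 / ε) * |J2eps K ε E - J2eps K ε {x : Ed d | 0 < ⟪x, p⟫}| ≤
      (2 / δ) * (volume (symmDiff E {x : Ed d | 0 < ⟪x, p⟫})).toReal *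
        ∫ z : Ed d, K z * ‖z‖ := by
  obtain ⟨hδ0, hδ1⟩ := hδ
  set H : Set (Ed d) := {x : Ed d | 0 < ⟪x, p⟫} with hHdef
  have hHmeas : MeasurableSet H :=
    measurableSet_lt measurable_const (continuous_id.inner continuous_const).measurable
  set S : Set (Ed d) := symmDiff E H with hSdef
  have hSmeas : MeasurableSet S := hE.symmDiff hHmeas
  have hSfin : volume S < ⊤ :=
    lt_of_le_of_lt (measure_mono hEH) (measure_closedBall_lt_top)
  set C : ℝ := ∫ z : Ed d, K z * ‖z‖ with hCdef
  have hC0 : 0 ≤ C := integral_nonneg fun z => mul_nonneg (hKnonneg z) (norm_nonneg z)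
  set B : Set (Ed d) := Metric.ball 0 1 with hBdef
  set χ : Set (Ed d) → Ed d → ℝ := fun A => A.indicator (fun _ => (1 : ℝ)) with hχdef
  set F : Set (Ed d) → Ed d → ℝ :=
    fun A x => ∫ y in Bᶜ, Keps K ε (y - x) * |χ A y - χ A x| with hFdef
  have hJ : ∀ A : Set (Ed d), J2eps K ε A = ∫ x in B, F A x := fun A => rfl
  -- not in S outside closed ball radius 1-δ
  have hnotS : ∀ y : Ed d, 1 ≤ ‖y‖ → y ∉ S := by
    intro y hy hyS
    have := hEH hyS
    rw [Metric.mem_closedBall, dist_zero_right] at this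
    linarith
  -- measurability of F
  have hFmeas : ∀ A : Set (Ed d), MeasurableSet A → StronglyMeasurable (F A) := by
    intro A hA
    have hm : Measurable (Function.uncurry
        fun x y : Ed d => Keps K ε (y - x) * |χ A y - χ A x|) := by
      apply Measurable.mul
      · exact measurable_const.mul
          (hKmeas.comp ((measurable_snd.sub measurable_fst).const_smul ε⁻¹))
      · exact (((measurable_const.indicator hA).comp measurable_snd).sub
          ((measurable_const.indicator hA).comp measurable_fst)).abs
    exact hm.stronglyMeasurable.integral_prod_right
  -- inner integrability
  have hInner : ∀ (A : Set (Ed d)), MeasurableSet A → ∀ x : Ed d, ‖x‖ < 1 →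
      Integrable (fun y => Keps K ε (y - x) * |χ A y - χ A x|) (volume.restrict Bᶜ) := by
    intro A hA x hx
    have hmeasy : Measurable (fun y : Ed d => Keps K ε (y - x) * |χ A y - χ A x|) := by
      apply Measurable.mul
      · exact measurable_const.mul
          (hKmeas.comp ((measurable_id.sub measurable_const).const_smul ε⁻¹))
      · exact ((measurable_const.indicator hA).sub measurable_const).abs
    refine Integrable.mono'
      (((keps_norm_integrable hKsum hε x).const_mul (1 - ‖x‖)⁻¹).restrict)
      hmeasy.aestronglyMeasurable ?_
    filter_upwards [ae_restrict_mem measurableSet_ball.compl] with y hy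
    have hy1 : 1 ≤ ‖y‖ := by
      by_contra h
      exact hy (by simpa [hBdef, Metric.mem_ball, dist_zero_right] using not_le.mp h)
    have hyx : 1 - ‖x‖ ≤ ‖y - x‖ := by
      have := norm_sub_norm_le y x
      linarith
    have hxpos : 0 < 1 - ‖x‖ := by linarith
    have hK0 := Keps_nonneg hKnonneg hε (y - x)
    rw [Real.norm_eq_abs, abs_of_nonneg (mul_nonneg hK0 (abs_nonneg _))]
    calc Keps K ε (y - x) * |χ A y - χ A x| ≤ Keps K ε (y - x) * 1 :=
          mul_le_mul_of_nonneg_left (indicator_abs_sub_le_one A x y) hK0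
      _ ≤ Keps K ε (y - x) * ((1 - ‖x‖)⁻¹ * ‖y - x‖) := by
          apply mul_le_mul_of_nonneg_left _ hK0
          rw [le_inv_mul_iff₀ hxpos]
          simpa using hyx
      _ = (1 - ‖x‖)⁻¹ * (Keps K ε (y - x) * ‖y - x‖) := by ring
  -- pointwise bound on the difference
  have hdiff : ∀ x : Ed d, ‖x‖ < 1 →
      |F E x - F H x| ≤ S.indicator (fun _ => δ⁻¹ * (ε * C)) x := by
    intro x hx
    have hIE := hInner E hE x hx
    have hIH := hInner H hHmeas x hx
    have hsub : F E x - F H x = ∫ y in Bᶜ,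
        (Keps K ε (y - x) * |χ E y - χ E x| - Keps K ε (y - x) * |χ H y - χ H x|) :=
      (integral_sub hIE hIH).symm
    by_cases hxS : x ∈ S
    · have hxnorm : ‖x‖ ≤ 1 - δ := by
        have := hEH hxS
        rwa [Metric.mem_closedBall, dist_zero_right] at this
      have hbound : ∀ y : Ed d, y ∈ Bᶜ →
          abs (Keps K ε (y - x) * |χ E y - χ E x| - Keps K ε (y - x) * |χ H y - χ H x|)
            ≤ δ⁻¹ * (Keps K ε (y - x) * ‖y - x‖) := by
        intro y hy
        have hy1 : 1 ≤ ‖y‖ := by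
          by_contra h
          exact hy (by simpa [hBdef, Metric.mem_ball, dist_zero_right] using not_le.mp h)
        have hyS : y ∉ S := hnotS y hy1
        have hyEH : χ E y = χ H y := indicator_eq_of_not_mem_symmDiff hyS
        have hK0 := Keps_nonneg hKnonneg hε (y - x)
        have hyx : δ ≤ ‖y - x‖ := by
          have := norm_sub_norm_le y x
          linarith
        have habs : abs (|χ E y - χ E x| - |χ H y - χ H x|) ≤ 1 := by
          rw [hyEH]
          refine (abs_abs_sub_abs_le_abs_sub _ _).trans ?_
          have he : χ H y - χ E x - (χ H y - χ H x) = χ H x - χ E x := by ring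
          rw [he]
          by_cases hxE : x ∈ E <;> by_cases hxH : x ∈ H <;>
            simp [hχdef, Set.indicator_apply, hxE, hxH]
        calc abs (Keps K ε (y - x) * |χ E y - χ E x| - Keps K ε (y - x) * |χ H y - χ H x|)
            = Keps K ε (y - x) * abs (|χ E y - χ E x| - |χ H y - χ H x|) := by
              rw [← mul_sub, abs_mul, abs_of_nonneg hK0]
          _ ≤ Keps K ε (y - x) * 1 := mul_le_mul_of_nonneg_left habs hK0
          _ ≤ Keps K ε (y - x) * (δ⁻¹ * ‖y - x‖) := by
              apply mul_le_mul_of_nonneg_left _ hK0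
              rw [le_inv_mul_iff₀ hδ0]
              simpa using hyx
          _ = δ⁻¹ * (Keps K ε (y - x) * ‖y - x‖) := by ring
      rw [hsub, Set.indicator_of_mem hxS]
      calc abs (∫ y in Bᶜ, (Keps K ε (y - x) * |χ E y - χ E x|
              - Keps K ε (y - x) * |χ H y - χ H x|))
          ≤ ∫ y in Bᶜ, abs (Keps K ε (y - x) * |χ E y - χ E x|
              - Keps K ε (y - x) * |χ H y - χ H x|) := by
            simpa [Real.norm_eq_abs] using
              norm_integral_le_integral_norm (μ := volume.restrict Bᶜ)
                (fun y => Keps K ε (y - x) * |χ E y - χ E x|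
                  - Keps K ε (y - x) * |χ H y - χ H x|)
        _ ≤ ∫ y in Bᶜ, δ⁻¹ * (Keps K ε (y - x) * ‖y - x‖) := by
            refine integral_mono_ae (hIE.sub hIH).abs
              (((keps_norm_integrable hKsum hε x).const_mul δ⁻¹).restrict) ?_
            filter_upwards [ae_restrict_mem measurableSet_ball.compl] with y hy
            exact hbound y hy
        _ = δ⁻¹ * ∫ y in Bᶜ, Keps K ε (y - x) * ‖y - x‖ := integral_const_mul _ _
        _ ≤ δ⁻¹ * ∫ y, Keps K ε (y - x) * ‖y - x‖ := by
            apply mul_le_mul_of_nonneg_left _ (inv_nonneg.2 hδ0.le)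
            refine setIntegral_le_integral (keps_norm_integrable hKsum hε x) ?_
            filter_upwards with y
            exact mul_nonneg (Keps_nonneg hKnonneg hε _) (norm_nonneg _)
        _ = δ⁻¹ * (ε * C) := by rw [keps_norm_integral K hε x]
    · have hxEH : χ E x = χ H x := indicator_eq_of_not_mem_symmDiff hxS
      have h0 : ∀ y ∈ Bᶜ,
          (Keps K ε (y - x) * |χ E y - χ E x| - Keps K ε (y - x) * |χ H y - χ H x|) = 0 := by
        intro y hy
        have hy1 : 1 ≤ ‖y‖ := by
          by_contra h
          exact hy (by simpa [hBdef, Metric.mem_ball, dist_zero_right] using not_le.mp h)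
        have hyEH : χ E y = χ H y := indicator_eq_of_not_mem_symmDiff (hnotS y hy1)
        rw [hyEH, hxEH]
        ring
      rw [hsub, setIntegral_congr_fun measurableSet_ball.compl h0,
        integral_zero, Set.indicator_of_notMem hxS, abs_zero]
  -- the dominating function is integrable
  have hGint : Integrable (S.indicator fun _ => δ⁻¹ * (ε * C)) volume := by
    rw [integrable_indicator_iff hSmeas]
    exact integrableOn_const hSfin.ne
  -- integrability of the difference F E - F H on B
  have hdiffInt : Integrable (fun x => F E x - F H x) (volume.restrict B) := by
    refine Integrable.mono' hGint.restrict
      (((hFmeas E hE).sub (hFmeas H hHmeas)).aestronglyMeasurable) ?_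
    filter_upwards [ae_restrict_mem measurableSet_ball] with x hx
    have hx1 : ‖x‖ < 1 := by
      simpa [hBdef, Metric.mem_ball, dist_zero_right] using hx
    simpa [Real.norm_eq_abs] using hdiff x hx1
  have hRHS0 : 0 ≤ (2 / δ) * (volume S).toReal * C := by
    apply mul_nonneg (mul_nonneg (by positivity) ENNReal.toReal_nonneg) hC0
  by_cases hFEint : Integrable (F E) (volume.restrict B)
  · have hFHint : Integrable (F H) (volume.restrict B) := by
      have hfun : F H = fun x => F E x - (F E x - F H x) := by funext x; ring
      rw [hfun]
      exact hFEint.sub hdiffInt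
    rw [hJ E, hJ H, ← integral_sub hFEint hFHint]
    have h1 : |∫ x in B, (F E x - F H x)| ≤ δ⁻¹ * (ε * C) * (volume S).toReal := by
      calc |∫ x in B, (F E x - F H x)| ≤ ∫ x in B, |F E x - F H x| := by
            simpa [Real.norm_eq_abs] using
              norm_integral_le_integral_norm (μ := volume.restrict B)
                (fun x => F E x - F H x)
        _ ≤ ∫ x in B, S.indicator (fun _ => δ⁻¹ * (ε * C)) x := by
            refine integral_mono_ae hdiffInt.abs hGint.restrict ?_
            filter_upwards [ae_restrict_mem measurableSet_ball] with x hx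
            have hx1 : ‖x‖ < 1 := by
              simpa [hBdef, Metric.mem_ball, dist_zero_right] using hx
            exact hdiff x hx1
        _ ≤ ∫ x, S.indicator (fun _ => δ⁻¹ * (ε * C)) x := by
            refine setIntegral_le_integral hGint ?_
            filter_upwards with x
            exact Set.indicator_nonneg (fun _ _ => by positivity) x
        _ = δ⁻¹ * (ε * C) * (volume S).toReal := by
            rw [integral_indicator_const _ hSmeas]
            simp [mul_comm]
            exact mul_comm _ _
    have h2 : (1 / ε) * |∫ x in B, (F E x - F H x)|
        ≤ (1 / ε) * (δ⁻¹ * (ε * C) * (volume S).toReal) :=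
      mul_le_mul_of_nonneg_left h1 (by positivity)
    refine h2.trans ?_
    have hεne : ε ≠ 0 := hε.ne'
    have hδne : δ ≠ 0 := hδ0.ne'
    have hT0 : 0 ≤ (volume S).toReal := ENNReal.toReal_nonneg
    have heq : (1 / ε) * (δ⁻¹ * (ε * C) * (volume S).toReal)
        = δ⁻¹ * C * (volume S).toReal := by field_simp
    rw [heq]
    have h3 : δ⁻¹ * C * (volume S).toReal ≤ 2 * δ⁻¹ * C * (volume S).toReal := by
      have : 0 ≤ δ⁻¹ * C * (volume S).toReal := by positivity
      nlinarith
    refine h3.trans_eq ?_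
    rw [div_eq_mul_inv]
    ring
  · have hFHint : ¬ Integrable (F H) (volume.restrict B) := by
      intro hFH
      apply hFEint
      have hfun : F E = fun x => (F E x - F H x) + F H x := by funext x; ring
      rw [hfun]
      exact hdiffInt.add hFH
    rw [hJ E, hJ H, integral_undef hFEint, integral_undef hFHint]
    simpa using hRHS0
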